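/- (Theorem 7, probabilistic model selection consistency for partial correlation graphs.) Let (Ω, μ) be a probability space, p ≥ 1, let K be a real p × p matrix, let (a_n) be a sequence of positive reals, C > 0, and for each n let K̂_n : Ω → (p × p real matrices) be measurable with μ{ω : max_{i,j} |K̂_n(ω)_{ij} − K_{ij}| > C·a_n} → 0 as n → ∞. Let (t_n) be a sequence of thresholds with C·a_n < t_n, and suppose that every nonzero off-diagonal entry of K satisfies |K_{ij}| ≥ t_n + C·a_n for all n. Then μ{ω : for all pairs i ≠ j, |K̂_n(ω)_{ij}| ≥ t_n if and only if K_{ij} ≠ 0} → 1 as n → ∞. -/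
import Mathlib


open MeasureTheory Filter

/-- Theorem 7 (probabilistic model selection consistency for partial correlation
graphs): if `μ{ω : max_{i,j} |K̂_n(ω)_{ij} − K_{ij}| > C·a_n} → 0`, `C·a_n < t_n`, and
every nonzero off-diagonal entry of `K` satisfies `|K_{ij}| ≥ t_n + C·a_n` for all `n`,
then `μ{ω : ∀ i ≠ j, |K̂_n(ω)_{ij}| ≥ t_n ↔ K_{ij} ≠ 0} → 1`. -/
theorem pg_model_selection_consistency {Ω : Type*} [MeasurableSpace Ω] (μ : Measure Ω)
    [IsProbabilityMeasure μ] (p : ℕ) (hp : 1 ≤ p)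
    (K : Fin p → Fin p → ℝ) (a : ℕ → ℝ) (ha : ∀ n, 0 < a n) (C : ℝ) (hC : 0 < C)
    (Khat : ℕ → Ω → Fin p → Fin p → ℝ) (hmeas : ∀ n, Measurable (Khat n))
    (hconv : Tendsto (fun n => μ {ω | ∃ i j, |Khat n ω i j - K i j| > C * a n})
      atTop (nhds 0))
    (t : ℕ → ℝ) (ht : ∀ n, C * a n < t n)
    (hmin : ∀ n, ∀ i j, i ≠ j → K i j ≠ 0 → |K i j| ≥ t n + C * a n) :
    Tendsto (fun n => μ {ω | ∀ i j, i ≠ j → (|Khat n ω i j| ≥ t n ↔ K i j ≠ 0)})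
      atTop (nhds 1) := by
  set bad : ℕ → Set Ω := fun n => {ω | ∃ i j, |Khat n ω i j - K i j| > C * a n} with hbad
  set good : ℕ → Set Ω :=
    fun n => {ω | ∀ i j, i ≠ j → (|Khat n ω i j| ≥ t n ↔ K i j ≠ 0)} with hgood
  -- badᶜ ⊆ good
  have hsub : ∀ n, (bad n)ᶜ ⊆ good n := by
    intro n ω hω i j hij
    simp only [hbad, Set.mem_compl_iff, Set.mem_setOf_eq, not_exists, not_lt] at hω
    have hle : ∀ i j, |Khat n ω i j - K i j| ≤ C * a n := hω
    constructor
    · intro hge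
      by_contra h0
      have : |Khat n ω i j| ≤ C * a n := by
        have := hle i j; rw [h0] at this; simpa using this
      linarith [ht n]
    · intro h0
      have h1 : |K i j| ≥ t n + C * a n := hmin n i j hij h0
      have h2 : |K i j| - |Khat n ω i j| ≤ |Khat n ω i j - K i j| := by
        have := abs_sub_abs_le_abs_sub (K i j) (Khat n ω i j)
        rw [abs_sub_comm] at this
        linarith
      linarith [hle i j]
  -- 1 - μ (bad n) ≤ μ (good n)
  have hlb : ∀ n, 1 - μ (bad n) ≤ μ (good n) := by
    intro n
    have h1 : (1 : ENNReal) ≤ μ (good n) + μ (bad n) := by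
      have : μ Set.univ ≤ μ (good n ∪ bad n) := by
        apply measure_mono
        intro ω _
        by_cases h : ω ∈ bad n
        · exact Or.inr h
        · exact Or.inl (hsub n h)
      calc (1 : ENNReal) = μ Set.univ := (measure_univ).symm
        _ ≤ μ (good n ∪ bad n) := this
        _ ≤ μ (good n) + μ (bad n) := measure_union_le _ _
    exact tsub_le_iff_right.mpr h1
  have hub : ∀ n, μ (good n) ≤ 1 := fun n => prob_le_one
  have hlow : Tendsto (fun n => 1 - μ (bad n)) atTop (nhds 1) := by
    have := ENNReal.Tendsto.sub (tendsto_const_nhds (x := (1 : ENNReal))) hconv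
      (Or.inl (by simp))
    simpa using this
  exact tendsto_of_tendsto_of_tendsto_of_le_of_le hlow tendsto_const_nhds hlb hub
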